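/- (Corollary 1) Let x* ≥ 0, set x̃ᵢ = min{xᵢ, x*} and E^d = Σᵢ p̄ᵢ·min{xᵢ, x*}. Define the closed infeasible regions G_{p̄,x} = {(p,E) ∈ [0,∞)² : E ≥ Ω_{p̄,x}(p)} and G_{p̄,x̃} = {(p,E) ∈ [0,∞)² : E ≥ Ω_{p̄,x̃}(p)}. Then G_{p̄,x̃} = Conv(G_{p̄,x} ∪ {(0, E^d)}), where Conv denotes the convex hull in ℝ². -/

import Mathlib

open MeasureTheory Set Finset

/-- The E-p transform of a signal `P`: the energy required above power rating `p`. -/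
noncomputable def EpTransform (P : ℝ → ℝ) (p : ℝ) : ℝ :=
  ∫ t in Set.Ioi (0:ℝ), max (P t - p) 0

/-- The worst-case reference signal `R_{p̄,x}(t) = Σᵢ p̄ᵢ·𝟙[0 ≤ t < xᵢ]`. -/
noncomputable def worstCase {n : ℕ} (pbar x : Fin n → ℝ) (t : ℝ) : ℝ :=
  ∑ i, if 0 ≤ t ∧ t < x i then pbar i else 0

/-- The discharging capacity curve `Ω_{p̄,x}`. -/
noncomputable def capacity {n : ℕ} (pbar x : Fin n → ℝ) (p : ℝ) : ℝ :=
  EpTransform (worstCase pbar x) p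

/-- The closed infeasible region `G_{p̄,x} = {(p,E) ∈ [0,∞)² : E ≥ Ω_{p̄,x}(p)}`. -/
noncomputable def infeasibleRegion {n : ℕ} (pbar x : Fin n → ℝ) : Set (ℝ × ℝ) :=
  {q : ℝ × ℝ | 0 ≤ q.1 ∧ 0 ≤ q.2 ∧ capacity pbar x q.1 ≤ q.2}

lemma worstCase_nonneg {n : ℕ} (pbar x : Fin n → ℝ) (hp : ∀ i, 0 < pbar i) (t : ℝ) :
    0 ≤ worstCase pbar x t := by
  refine Finset.sum_nonneg fun i _ => ?_
  split
  · exact (hp i).le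
  · exact le_rfl

lemma measurable_worstCase {n : ℕ} (pbar x : Fin n → ℝ) : Measurable (worstCase pbar x) := by
  apply Finset.measurable_sum
  intro i _
  exact Measurable.ite (measurableSet_Ico (a := (0:ℝ)) (b := x i)) measurable_const measurable_const

lemma integrable_worstCase {n : ℕ} (pbar x : Fin n → ℝ) :
    Integrable (worstCase pbar x) (volume.restrict (Ioi 0)) := by
  apply Integrable.restrict
  unfold worstCase
  apply integrable_finset_sum
  intro i _
  have h : (fun t : ℝ => if 0 ≤ t ∧ t < x i then pbar i else 0)
      = (Ico (0:ℝ) (x i)).indicator (fun _ => pbar i) := by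
    ext t; simp [Set.indicator, Set.mem_Ico]
  rw [h, integrable_indicator_iff measurableSet_Ico]
  exact integrableOn_const measure_Ico_lt_top.ne

lemma integrable_max {n : ℕ} (pbar x : Fin n → ℝ) (hp : ∀ i, 0 < pbar i) (p : ℝ) (hp0 : 0 ≤ p) :
    Integrable (fun t => max (worstCase pbar x t - p) 0) (volume.restrict (Ioi 0)) := by
  apply (integrable_worstCase pbar x).mono'
  · exact (((measurable_worstCase pbar x).sub measurable_const).max measurable_const).aestronglyMeasurable
  · filter_upwards with t
    rw [Real.norm_eq_abs, abs_of_nonneg (le_max_right _ _)]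
    exact max_le (by linarith [worstCase_nonneg pbar x hp t]) (worstCase_nonneg pbar x hp t)

lemma integral_ite (c y : ℝ) (hy : 0 ≤ y) :
    ∫ t in Set.Ioi (0:ℝ), (if 0 ≤ t ∧ t < y then c else 0) = c * y := by
  have h1 : ∀ t ∈ Ioi (0:ℝ), (if 0 ≤ t ∧ t < y then c else 0) = (Ioo (0:ℝ) y).indicator (fun _ => c) t := by
    intro t ht
    have h0 : (0:ℝ) ≤ t := le_of_lt ht
    by_cases h : t < y <;> simp [Set.indicator, Set.mem_Ioo, h, h0, ht.out]
  rw [setIntegral_congr_fun measurableSet_Ioi h1, integral_indicator measurableSet_Ioo,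
      Measure.restrict_restrict measurableSet_Ioo,
      Set.inter_eq_left.2 Set.Ioo_subset_Ioi_self, setIntegral_const]
  simp [Real.volume_Ioo, hy, mul_comm]

lemma capacity_nonneg {n : ℕ} (pbar x : Fin n → ℝ) (p : ℝ) : 0 ≤ capacity pbar x p :=
  integral_nonneg fun _ => le_max_right _ _

lemma capacity_combo {n : ℕ} (pbar x : Fin n → ℝ) (hp : ∀ i, 0 < pbar i)
    {p q a b : ℝ} (hp0 : 0 ≤ p) (hq0 : 0 ≤ q) (ha : 0 ≤ a) (hb : 0 ≤ b) (hab : a + b = 1) :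
    capacity pbar x (a * p + b * q) ≤ a * capacity pbar x p + b * capacity pbar x q := by
  have h1 := integrable_max pbar x hp p hp0
  have h2 := integrable_max pbar x hp q hq0
  unfold capacity EpTransform
  have key : (∫ t in Set.Ioi (0:ℝ), max (worstCase pbar x t - (a * p + b * q)) 0)
      ≤ ∫ t in Set.Ioi (0:ℝ),
          (a * max (worstCase pbar x t - p) 0 + b * max (worstCase pbar x t - q) 0) := by
    refine integral_mono (integrable_max pbar x hp _ (by positivity)) ((h1.const_mul a).add (h2.const_mul b)) ?_
    intro t
    have e1 : a * (worstCase pbar x t - p) ≤ a * max (worstCase pbar x t - p) 0 :=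
      mul_le_mul_of_nonneg_left (le_max_left _ _) ha
    have e2 : b * (worstCase pbar x t - q) ≤ b * max (worstCase pbar x t - q) 0 :=
      mul_le_mul_of_nonneg_left (le_max_left _ _) hb
    have e3 : 0 ≤ a * max (worstCase pbar x t - p) 0 :=
      mul_nonneg ha (le_max_right _ _)
    have e4 : 0 ≤ b * max (worstCase pbar x t - q) 0 :=
      mul_nonneg hb (le_max_right _ _)
    have : worstCase pbar x t - (a * p + b * q)
        = a * (worstCase pbar x t - p) + b * (worstCase pbar x t - q) := by
      have : a * worstCase pbar x t + b * worstCase pbar x t = worstCase pbar x t := by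
        rw [← add_mul, hab, one_mul]
      ring_nf
      nlinarith [this]
    simp only [max_le_iff]
    constructor
    · linarith
    · linarith
  calc _ ≤ _ := key
    _ = a * _ + b * _ := by
        rw [integral_add (h1.const_mul a) (h2.const_mul b), MeasureTheory.integral_const_mul, MeasureTheory.integral_const_mul]

lemma convex_infeasibleRegion {n : ℕ} (pbar x : Fin n → ℝ) (hp : ∀ i, 0 < pbar i) :
    Convex ℝ (infeasibleRegion pbar x) := by
  rintro ⟨p₁, E₁⟩ ⟨hp₁, hE₁, hc₁⟩ ⟨p₂, E₂⟩ ⟨hp₂, hE₂, hc₂⟩ a b ha hb hab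
  refine ⟨by dsimp; positivity, by dsimp; positivity, ?_⟩
  dsimp only [Prod.smul_mk, Prod.mk_add_mk, smul_eq_mul]
  calc capacity pbar x (a * p₁ + b * p₂) ≤ a * capacity pbar x p₁ + b * capacity pbar x p₂ :=
        capacity_combo pbar x hp hp₁ hp₂ ha hb hab
    _ ≤ a * E₁ + b * E₂ :=
        add_le_add (mul_le_mul_of_nonneg_left hc₁ ha) (mul_le_mul_of_nonneg_left hc₂ hb)

section trunc
variable {n : ℕ} (pbar x : Fin n → ℝ) (xs : ℝ)

lemma worstCase_trunc_eq {t : ℝ} (ht : t < xs) :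
    worstCase pbar (fun i => min (x i) xs) t = worstCase pbar x t := by
  refine Finset.sum_congr rfl fun i _ => ?_
  congr 1
  simp only [eq_iff_iff, and_congr_right_iff]
  intro _
  exact ⟨fun h => lt_of_lt_of_le h (min_le_left _ _), fun h => lt_min h ht⟩

lemma worstCase_trunc_zero {t : ℝ} (ht : xs ≤ t) :
    worstCase pbar (fun i => min (x i) xs) t = 0 := by
  refine Finset.sum_eq_zero fun i _ => ?_
  rw [if_neg]
  rintro ⟨-, h2⟩
  exact absurd (lt_of_lt_of_le h2 (min_le_right _ _)) (not_lt.2 ht)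

lemma worstCase_le_pstar (hp : ∀ i, 0 < pbar i) {t : ℝ} (ht : xs ≤ t) :
    worstCase pbar x t ≤ ∑ i, if xs < x i then pbar i else 0 := by
  refine Finset.sum_le_sum fun i _ => ?_
  by_cases h : 0 ≤ t ∧ t < x i
  · rw [if_pos h, if_pos (lt_of_le_of_lt ht h.2)]
  · rw [if_neg h]
    split
    · exact (hp i).le
    · exact le_rfl

lemma pstar_le_worstCase (hp : ∀ i, 0 < pbar i) {t : ℝ} (h0 : 0 ≤ t) (ht : t < xs) :
    (∑ i, if xs < x i then pbar i else 0) ≤ worstCase pbar x t := by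
  refine Finset.sum_le_sum fun i _ => ?_
  by_cases h : xs < x i
  · rw [if_pos h, if_pos ⟨h0, lt_trans ht h⟩]
  · rw [if_neg h]
    split
    · exact (hp i).le
    · exact le_rfl

lemma pstar_nonneg (hp : ∀ i, 0 < pbar i) : 0 ≤ ∑ i, if xs < x i then pbar i else 0 := by
  refine Finset.sum_nonneg fun i _ => ?_
  split
  · exact (hp i).le
  · exact le_rfl

lemma cap_mono (hp : ∀ i, 0 < pbar i) {p : ℝ} (hp0 : 0 ≤ p) :
    capacity pbar (fun i => min (x i) xs) p ≤ capacity pbar x p := by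
  refine integral_mono (integrable_max pbar _ hp p hp0) (integrable_max pbar x hp p hp0) fun t => ?_
  refine max_le_max (sub_le_sub_right ?_ p) le_rfl
  refine Finset.sum_le_sum fun i _ => ?_
  by_cases h : 0 ≤ t ∧ t < min (x i) xs
  · rw [if_pos h, if_pos ⟨h.1, lt_of_lt_of_le h.2 (min_le_left _ _)⟩]
  · rw [if_neg h]
    split
    · exact (hp i).le
    · exact le_rfl

lemma cap_eq_of_ge (hp : ∀ i, 0 < pbar i) {p : ℝ}
    (hpp : (∑ i, if xs < x i then pbar i else 0) ≤ p) :
    capacity pbar (fun i => min (x i) xs) p = capacity pbar x p := by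
  unfold capacity EpTransform
  congr 1
  funext t
  rcases lt_or_ge t xs with ht | ht
  · rw [worstCase_trunc_eq pbar x xs ht]
  · rw [worstCase_trunc_zero pbar x xs ht]
    have h1 : worstCase pbar x t - p ≤ 0 := by
      have := worstCase_le_pstar pbar x xs hp ht
      linarith
    have h2 : (0:ℝ) - p ≤ 0 := by
      have := pstar_nonneg pbar x xs hp
      linarith
    rw [max_eq_right h1, max_eq_right h2]

lemma cap_linear (hp : ∀ i, 0 < pbar i) (hxs : 0 ≤ xs) {p : ℝ} (h0 : 0 ≤ p)
    (hple : p ≤ ∑ i, if xs < x i then pbar i else 0) :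
    capacity pbar (fun i => min (x i) xs) p
      = capacity pbar (fun i => min (x i) xs) (∑ i, if xs < x i then pbar i else 0)
        + ((∑ i, if xs < x i then pbar i else 0) - p) * xs := by
  set ps := ∑ i, if xs < x i then pbar i else 0 with hps
  set xt : Fin n → ℝ := fun i => min (x i) xs with hxt
  have hps0 : 0 ≤ ps := pstar_nonneg pbar x xs hp
  have key : ∀ t ∈ Ioi (0:ℝ),
      max (worstCase pbar xt t - p) 0
        = max (worstCase pbar xt t - ps) 0 + (if 0 ≤ t ∧ t < xs then ps - p else 0) := by
    intro t ht
    have ht0 : (0:ℝ) ≤ t := le_of_lt ht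
    rcases lt_or_ge t xs with h | h
    · have hR : ps ≤ worstCase pbar xt t := by
        rw [hxt, worstCase_trunc_eq pbar x xs h]
        exact pstar_le_worstCase pbar x xs hp ht0 h
      rw [if_pos ⟨ht0, h⟩, max_eq_left (by linarith), max_eq_left (by linarith)]
      ring
    · have hR : worstCase pbar xt t = 0 := worstCase_trunc_zero pbar x xs h
      rw [hR, if_neg (by rintro ⟨-, h2⟩; exact absurd h2 (not_lt.2 h)),
        max_eq_right (by linarith), max_eq_right (by linarith)]
      ring
  unfold capacity EpTransform
  rw [setIntegral_congr_fun measurableSet_Ioi key,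
    integral_add (integrable_max pbar xt hp ps hps0)]
  · congr 1
    exact integral_ite (ps - p) xs hxs
  · have h : (fun t : ℝ => if 0 ≤ t ∧ t < xs then ps - p else 0)
        = (Ico (0:ℝ) xs).indicator (fun _ => ps - p) := by
      ext t; simp [Set.indicator, Set.mem_Ico]
    rw [h]
    exact (((integrable_indicator_iff measurableSet_Ico).2
      (integrableOn_const measure_Ico_lt_top.ne))).restrict

lemma cap_trunc_zero (hp : ∀ i, 0 < pbar i) (hx : ∀ i, 0 ≤ x i) (hxs : 0 ≤ xs) :
    capacity pbar (fun i => min (x i) xs) 0 = ∑ i, pbar i * min (x i) xs := by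
  unfold capacity EpTransform worstCase
  have key : ∀ t ∈ Ioi (0:ℝ),
      max ((∑ i, if 0 ≤ t ∧ t < min (x i) xs then pbar i else 0) - 0) 0
        = ∑ i, (if 0 ≤ t ∧ t < min (x i) xs then pbar i else 0) := by
    intro t _
    rw [sub_zero, max_eq_left]
    exact worstCase_nonneg pbar _ hp t
  rw [setIntegral_congr_fun measurableSet_Ioi key, integral_finset_sum]
  · refine Finset.sum_congr rfl fun i _ => ?_
    rw [integral_ite (pbar i) (min (x i) xs) (le_min (hx i) hxs)]
  · intro i _
    have h : (fun t : ℝ => if 0 ≤ t ∧ t < min (x i) xs then pbar i else 0)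
        = (Ico (0:ℝ) (min (x i) xs)).indicator (fun _ => pbar i) := by
      ext t; simp [Set.indicator, Set.mem_Ico]
    rw [h]
    exact (((integrable_indicator_iff measurableSet_Ico).2
      (integrableOn_const measure_Ico_lt_top.ne))).restrict

end trunc

/-- Corollary 1: the closed infeasible region of the truncated fleet is the convex hull of
the original infeasible region together with the point `(0, E^d)`. -/
theorem truncated_infeasible_region_eq_convexHull {n : ℕ} (pbar x : Fin n → ℝ)
    (hp : ∀ i, 0 < pbar i) (hx : ∀ i, 0 ≤ x i)
    (xs : ℝ) (hxs : 0 ≤ xs) :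
    infeasibleRegion pbar (fun i => min (x i) xs) =
      convexHull ℝ (infeasibleRegion pbar x ∪ {((0 : ℝ), ∑ i, pbar i * min (x i) xs)}) := by
  set xt : Fin n → ℝ := fun i => min (x i) xs with hxt
  set Ed : ℝ := ∑ i, pbar i * min (x i) xs with hEddef
  set ps : ℝ := ∑ i, if xs < x i then pbar i else 0 with hpsdef
  have hps0 : 0 ≤ ps := pstar_nonneg pbar x xs hp
  have hEd : capacity pbar xt 0 = Ed := cap_trunc_zero pbar x xs hp hx hxs
  have hEd0 : 0 ≤ Ed := hEd ▸ capacity_nonneg pbar xt 0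
  have hcapps : capacity pbar xt ps = capacity pbar x ps := cap_eq_of_ge pbar x xs hp le_rfl
  have hEdval : Ed = capacity pbar x ps + ps * xs := by
    rw [← hEd, cap_linear pbar x xs hp hxs le_rfl hps0, hcapps, sub_zero]
  have hzmem : ((0:ℝ), Ed) ∈ convexHull ℝ (infeasibleRegion pbar x ∪ {((0 : ℝ), Ed)}) :=
    subset_convexHull ℝ _ (Or.inr rfl)
  apply Set.Subset.antisymm
  · rintro ⟨p, E⟩ ⟨hp0, hE0, hcap⟩
    simp only at hp0 hE0 hcap
    by_cases hcase : ps ≤ p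
    · exact subset_convexHull ℝ _ (Or.inl ⟨hp0, hE0, by
        rwa [← cap_eq_of_ge pbar x xs hp hcase]⟩)
    push_neg at hcase
    have hlin := cap_linear pbar x xs hp hxs hp0 hcase.le
    have hElow : capacity pbar x ps + (ps - p) * xs ≤ E := by
      rw [← hcapps]; rw [hlin] at hcap; exact hcap
    have hpspos : 0 < ps := lt_of_le_of_lt hp0 hcase
    by_cases hpz : p = 0
    · subst hpz
      have hEge : Ed ≤ E := by
        rw [hEdval]
        simpa using hElow
      by_cases hEbig : capacity pbar x 0 ≤ E
      · exact subset_convexHull ℝ _ (Or.inl ⟨le_rfl, hE0, hEbig⟩)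
      · push_neg at hEbig
        set c := capacity pbar x 0 with hc
        have hd : 0 < c - Ed := by linarith
        set θ := (E - Ed)/(c - Ed) with hθ
        have hθ0 : 0 ≤ θ := div_nonneg (by linarith) hd.le
        have hθ1 : θ ≤ 1 := by rw [div_le_one hd]; linarith
        have hgmem : ((0:ℝ), c) ∈ convexHull ℝ (infeasibleRegion pbar x ∪ {((0 : ℝ), Ed)}) :=
          subset_convexHull ℝ _ (Or.inl ⟨le_rfl, capacity_nonneg pbar x 0, le_rfl⟩)
        have hcomb := (convex_convexHull ℝ (infeasibleRegion pbar x ∪ {((0 : ℝ), Ed)}))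
          hzmem hgmem (by linarith : (0:ℝ) ≤ 1 - θ) hθ0 (by ring)
        have heq : (1 - θ) • ((0:ℝ), Ed) + θ • ((0:ℝ), c) = ((0:ℝ), E) := by
          have : θ * (c - Ed) = E - Ed := div_mul_cancel₀ _ (ne_of_gt hd)
          rw [Prod.ext_iff]
          constructor
          · simp
          · simp only [Prod.smul_mk, Prod.mk_add_mk, smul_eq_mul]
            nlinarith [this]
        rwa [heq] at hcomb
    · have hppos : 0 < p := lt_of_le_of_ne hp0 (Ne.symm hpz)
      set θ := p / ps with hθ
      have hθps : θ * ps = p := div_mul_cancel₀ _ (ne_of_gt hpspos)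
      have hθ0 : 0 < θ := div_pos hppos hpspos
      have hθ1 : θ < 1 := (div_lt_one hpspos).2 hcase
      set g2 := (E - (1 - θ)*Ed)/θ with hg2def
      have hg2 : capacity pbar x ps ≤ g2 := by
        rw [hg2def, le_div_iff₀ hθ0]
        have h1 : (1 - θ)*ps = ps - p := by rw [sub_mul, one_mul, hθps]
        have h2 : (1 - θ)*Ed = (1 - θ)*capacity pbar x ps + (ps - p) * xs := by
          rw [hEdval]; rw [mul_add, ← mul_assoc, h1]
        nlinarith [hElow]
      have hg20 : 0 ≤ g2 := le_trans (capacity_nonneg pbar x ps) hg2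
      have hgmem : ((ps:ℝ), g2) ∈ convexHull ℝ (infeasibleRegion pbar x ∪ {((0 : ℝ), Ed)}) :=
        subset_convexHull ℝ _ (Or.inl ⟨hps0, hg20, hg2⟩)
      have hcomb := (convex_convexHull ℝ (infeasibleRegion pbar x ∪ {((0 : ℝ), Ed)}))
        hzmem hgmem (by linarith : (0:ℝ) ≤ 1 - θ) hθ0.le (by ring)
      have heq : (1 - θ) • ((0:ℝ), Ed) + θ • ((ps:ℝ), g2) = ((p:ℝ), E) := by
        rw [Prod.ext_iff]
        constructor
        · simp only [Prod.smul_mk, Prod.mk_add_mk, smul_eq_mul]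
          rw [mul_zero, zero_add, hθps]
        · simp only [Prod.smul_mk, Prod.mk_add_mk, smul_eq_mul]
          rw [hg2def, mul_div_cancel₀ _ (ne_of_gt hθ0)]
          ring
      rwa [heq] at hcomb
  · apply convexHull_min ?_ (convex_infeasibleRegion pbar xt hp)
    rintro ⟨p, E⟩ (hq | hq)
    · exact ⟨hq.1, hq.2.1, le_trans (cap_mono pbar x xs hp hq.1) hq.2.2⟩
    · rw [Set.mem_singleton_iff] at hq
      rw [hq]
      exact ⟨le_rfl, hEd0, le_of_eq hEd⟩
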